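/- Define F(n) = c + (r − d·exp(α(u − γn)))·n. If u ≤ (1/α)·ln(r/d), then F(n) ≥ c > 0 for all n ≥ 0; consequently, any differentiable function n : [0,∞) → [0,∞) with n′(t) = F(n(t)) for all t ≥ 0 satisfies n(t) ≥ n(0) + c·t for all t ≥ 0, and hence n(t) → +∞ as t → ∞. -/

import Mathlib

/-- The right-hand side of the deterministic limiting bond equation. -/
noncomputable def Fb (α γ u c r d : ℝ) : ℝ → ℝ :=
  fun n => c + (r - d * Real.exp (α * (u - γ * n))) * n

/-- If `u ≤ (1/α)·ln(r/d)` then `F(n) ≥ c > 0` for all `n ≥ 0`; consequently any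
nonnegative differentiable solution of `n′ = F(n)` on `[0,∞)` satisfies
`n(t) ≥ n(0) + c·t`, hence tends to `+∞`. -/
theorem stmt_6 (α γ u c r d : ℝ) (hα : 0 < α) (hγ : 0 < γ) (hu : 0 < u)
    (hc : 0 < c) (hr : 0 < r) (hd : 0 < d) (hdr : d < r)
    (hu' : u ≤ (1 / α) * Real.log (r / d)) :
    (∀ x : ℝ, 0 ≤ x → c ≤ Fb α γ u c r d x) ∧
    ∀ n : ℝ → ℝ, (∀ t : ℝ, 0 ≤ t → 0 ≤ n t) →
      (∀ t : ℝ, 0 ≤ t → HasDerivWithinAt n (Fb α γ u c r d (n t)) (Set.Ici 0) t) →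
      (∀ t : ℝ, 0 ≤ t → n 0 + c * t ≤ n t) ∧
      Filter.Tendsto n Filter.atTop Filter.atTop := by
  have key : ∀ x : ℝ, 0 ≤ x → c ≤ Fb α γ u c r d x := by
    intro x hx
    have h1 : α * (u - γ * x) ≤ Real.log (r / d) := by
      have : α * (u - γ * x) ≤ α * u := by
        have : u - γ * x ≤ u := by nlinarith
        nlinarith
      have h2 : α * u ≤ Real.log (r / d) := by
        rw [one_div] at hu'
        calc α * u ≤ α * (α⁻¹ * Real.log (r / d)) := by nlinarith
          _ = Real.log (r / d) := by field_simp
      linarith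
    have h3 : Real.exp (α * (u - γ * x)) ≤ r / d := by
      calc Real.exp (α * (u - γ * x)) ≤ Real.exp (Real.log (r / d)) :=
            Real.exp_le_exp.mpr h1
        _ = r / d := Real.exp_log (by positivity)
    have h4 : d * Real.exp (α * (u - γ * x)) ≤ r := by
      calc d * Real.exp (α * (u - γ * x)) ≤ d * (r / d) := by nlinarith
        _ = r := by field_simp
    have : 0 ≤ (r - d * Real.exp (α * (u - γ * x))) * x := by nlinarith
    simp only [Fb]; linarith
  refine ⟨key, fun n hn hdn => ?_⟩
  have hmono : ∀ t : ℝ, 0 ≤ t → n 0 + c * t ≤ n t := by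
    have hM : MonotoneOn (fun t => n t - c * t) (Set.Ici (0 : ℝ)) := by
      apply monotoneOn_of_hasDerivWithinAt_nonneg (f' := fun t => Fb α γ u c r d (n t) - c)
        (convex_Ici 0)
      · intro t ht
        exact ((hdn t ht).sub ((hasDerivAt_id t).const_mul c).hasDerivWithinAt).continuousWithinAt
      · intro t ht
        rw [interior_Ici] at ht ⊢
        have := ((hdn t (le_of_lt ht)).sub
          ((hasDerivAt_id t).const_mul c).hasDerivWithinAt)
        exact (by simpa only [mul_one] using this.mono Set.Ioi_subset_Ici_self :
          HasDerivWithinAt (n - fun y => c * id y) (Fb α γ u c r d (n t) - c) (Set.Ioi 0) t)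
      · intro t ht
        rw [interior_Ici] at ht
        have := key (n t) (hn t (le_of_lt ht))
        linarith
    intro t ht
    have := hM (Set.self_mem_Ici) ht ht
    simp at this
    linarith
  refine ⟨hmono, ?_⟩
  apply Filter.tendsto_atTop_mono' _ _ (Filter.tendsto_atTop_add_const_left _ (n 0)
    (Filter.Tendsto.const_mul_atTop hc Filter.tendsto_id))
  filter_upwards [Filter.eventually_ge_atTop (0 : ℝ)] with t ht
  exact hmono t ht
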